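/- Let N, K, n be natural numbers with K ≤ N and 1 ≤ n ≤ N, let p = (K : ℝ)/(N : ℝ), and let ε > 0 be a real number. Then ∑_{t = 0}^{n} [ if (t : ℝ) ≥ (p + ε)·n then (K choose t) · ((N − K) choose (n − t)) else 0 ] ≤ exp(−2·ε²·n) · (N choose n), where (· choose ·) denotes the binomial coefficient and exp is the real exponential. -/

import Mathlib

open Real Finset

lemma hoeff_scalar (p : ℝ) (hp0 : 0 ≤ p) (hp1 : p ≤ 1) {t : ℝ} (ht : 0 ≤ t) :
    1 - p + p * Real.exp t ≤ Real.exp (p * t + t ^ 2 / 8) := by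
  set D : ℝ → ℝ := fun x => 1 - p + p * Real.exp x with hDdef
  have hD : ∀ x, 0 < D x := by
    intro x
    show 0 < 1 - p + p * Real.exp x
    rcases eq_or_lt_of_le hp1 with h | h
    · simp [← h]; positivity
    · have := mul_nonneg hp0 (Real.exp_pos x).le
      linarith
  have hDderiv : ∀ x, HasDerivAt D (p * Real.exp x) x := fun x =>
    ((Real.hasDerivAt_exp x).const_mul p).const_add (1 - p)
  set g' : ℝ → ℝ := fun x => p + x / 4 - p * Real.exp x / D x with hg'def
  have hg'deriv : ∀ x, HasDerivAt g' (1 / 4 - p * (1 - p) * Real.exp x / (D x) ^ 2) x := by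
    intro x
    have h1 : HasDerivAt (fun x : ℝ => p + x / 4) (1 / 4) x := by
      simpa using ((hasDerivAt_id x).div_const 4).const_add p
    have h2 : HasDerivAt (fun x => p * Real.exp x / D x)
        ((p * Real.exp x * D x - p * Real.exp x * (p * Real.exp x)) / (D x) ^ 2) x :=
      ((Real.hasDerivAt_exp x).const_mul p).div (hDderiv x) (hD x).ne'
    have := h1.sub h2
    refine this.congr_deriv ?_
    have : D x = 1 - p + p * Real.exp x := rfl
    congr 1; congr 1; rw [this]
    ring
  have hg'mono : Monotone g' := by
    apply monotone_of_deriv_nonneg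
    · exact fun x => (hg'deriv x).differentiableAt
    · intro x
      rw [(hg'deriv x).deriv]
      have hd2 : (0:ℝ) < (D x) ^ 2 := pow_pos (hD x) 2
      have : p * (1 - p) * Real.exp x / (D x) ^ 2 ≤ 1 / 4 := by
        rw [div_le_iff₀ hd2]
        have hDx : D x = 1 - p + p * Real.exp x := rfl
        nlinarith [sq_nonneg ((1 - p) - p * Real.exp x), Real.exp_pos x]
      linarith
  have hg'0 : g' 0 = 0 := by simp [hg'def, hDdef]
  have hg'nonneg : ∀ x, 0 ≤ x → 0 ≤ g' x := by
    intro x hx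
    rw [← hg'0]; exact hg'mono hx
  set g : ℝ → ℝ := fun x => p * x + x ^ 2 / 8 - Real.log (D x) with hgdef
  have hgderiv : ∀ x, HasDerivAt g (g' x) x := by
    intro x
    have h1 : HasDerivAt (fun x : ℝ => p * x + x ^ 2 / 8) (p + x / 4) x := by
      have a1 : HasDerivAt (fun x : ℝ => p * x) p x := by
        simpa using (hasDerivAt_id x).const_mul p
      have a2 : HasDerivAt (fun x : ℝ => x ^ 2 / 8) (x / 4) x := by
        have := (hasDerivAt_pow 2 x).div_const 8
        refine this.congr_deriv ?_
        ring
      exact a1.add a2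
    have h3 : HasDerivAt (fun x => Real.log (D x)) (p * Real.exp x / D x) x :=
      (hDderiv x).log (hD x).ne'
    exact h1.sub h3
  have hgmono : MonotoneOn g (Set.Ici 0) := by
    apply monotoneOn_of_deriv_nonneg (convex_Ici 0)
    · exact Continuous.continuousOn (by
        fun_prop (disch := intro x; exact (hD x).ne'))
    · intro x _
      exact (hgderiv x).differentiableAt.differentiableWithinAt
    · intro x hx
      rw [(hgderiv x).deriv]
      exact hg'nonneg x (le_of_lt (by simpa using hx))
  have hg0 : g 0 = 0 := by simp [hgdef, hDdef]
  have hgt : 0 ≤ g t := by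
    rw [← hg0]
    exact hgmono Set.self_mem_Ici ht ht
  have hlog : Real.log (D t) ≤ p * t + t ^ 2 / 8 := by
    have : g t = p * t + t ^ 2 / 8 - Real.log (D t) := rfl
    linarith [hgt.trans_eq this]
  calc 1 - p + p * Real.exp t = D t := rfl
    _ = Real.exp (Real.log (D t)) := (Real.exp_log (hD t)).symm
    _ ≤ Real.exp (p * t + t ^ 2 / 8) := Real.exp_le_exp.mpr hlog


lemma desc_ineq (K N : ℕ) (hKN : K ≤ N) (j : ℕ) :
    K.descFactorial j * N ^ j ≤ K ^ j * N.descFactorial j := by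
  induction j with
  | zero => simp
  | succ j ih =>
    rw [Nat.descFactorial_succ, Nat.descFactorial_succ, pow_succ, pow_succ]
    have h1 : (K - j) * N ≤ K * (N - j) := by
      rw [Nat.sub_mul, Nat.mul_sub]
      have h0 : K * j ≤ j * N := by rw [Nat.mul_comm K j]; exact Nat.mul_le_mul_left j hKN
      exact Nat.sub_le_sub_left h0 (K * N)
    calc (K - j) * K.descFactorial j * (N ^ j * N)
        = ((K - j) * N) * (K.descFactorial j * N ^ j) := by ring
      _ ≤ (K * (N - j)) * (K ^ j * N.descFactorial j) := Nat.mul_le_mul h1 ih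
      _ = K ^ j * K * ((N - j) * N.descFactorial j) := by ring

lemma choose_pow_ineq (K N : ℕ) (hKN : K ≤ N) (j : ℕ) :
    K.choose j * N ^ j ≤ K ^ j * N.choose j := by
  have h := desc_ineq K N hKN j
  rw [Nat.descFactorial_eq_factorial_mul_choose, Nat.descFactorial_eq_factorial_mul_choose] at h
  have hfac : 0 < j.factorial := Nat.factorial_pos j
  refine Nat.le_of_mul_le_mul_left ?_ hfac
  calc j.factorial * (K.choose j * N ^ j) = j.factorial * K.choose j * N ^ j := by ring
    _ ≤ K ^ j * (j.factorial * N.choose j) := h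
    _ = j.factorial * (K ^ j * N.choose j) := by ring

lemma moment_ineq (N K n j : ℕ) (hKN : K ≤ N) (hjn : j ≤ n) (hnN : n ≤ N) :
    K.choose j * N ^ j * (N - j).choose (n - j) ≤ K ^ j * (N.choose n * n.choose j) := by
  rw [Nat.choose_mul hjn]
  calc K.choose j * N ^ j * (N - j).choose (n - j)
      ≤ K ^ j * N.choose j * (N - j).choose (n - j) :=
        Nat.mul_le_mul_right _ (choose_pow_ineq K N hKN j)
    _ = K ^ j * (N.choose j * (N - j).choose (n - j)) := by ring

lemma sum_moment (N K n j : ℕ) (hKN : K ≤ N) (hjn : j ≤ n) :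
    ∑ t ∈ range (n + 1), K.choose t * (N - K).choose (n - t) * t.choose j
      = K.choose j * (N - j).choose (n - j) := by
  by_cases hjK : j ≤ K
  · have hsub : Finset.Ico j (n + 1) ⊆ range (n + 1) := by
      intro t ht; simp at ht ⊢; omega
    rw [← Finset.sum_subset hsub (by
      intro t ht hmem
      simp at ht hmem
      have : t < j := by omega
      rw [Nat.choose_eq_zero_of_lt this, Nat.mul_zero])]
    rw [Finset.sum_Ico_eq_sum_range]
    have hrange : n + 1 - j = (n - j) + 1 := by omega
    rw [hrange]
    have hterm : ∀ i ∈ range ((n - j) + 1),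
        K.choose (j + i) * (N - K).choose (n - (j + i)) * (j + i).choose j
          = K.choose j * ((K - j).choose i * (N - K).choose ((n - j) - i)) := by
      intro i hi
      have hns : n - (j + i) = (n - j) - i := by omega
      rw [hns]
      by_cases hiK : j + i ≤ K
      · have := Nat.choose_mul (n := K) (Nat.le_add_right j i)
        rw [Nat.add_sub_cancel_left] at this
        calc K.choose (j + i) * (N - K).choose ((n-j) - i) * (j + i).choose j
            = K.choose (j+i) * (j+i).choose j * (N - K).choose ((n-j) - i) := by ring
          _ = K.choose j * (K - j).choose i * (N - K).choose ((n-j)-i) := by rw [this]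
          _ = _ := by ring
      · rw [Nat.choose_eq_zero_of_lt (by omega : K < j + i),
            Nat.choose_eq_zero_of_lt (by omega : K - j < i)]
        simp
    rw [Finset.sum_congr rfl hterm, ← Finset.mul_sum]
    congr 1
    have hV := Nat.add_choose_eq (K - j) (N - K) (n - j)
    rw [Finset.Nat.sum_antidiagonal_eq_sum_range_succ_mk] at hV
    have : K - j + (N - K) = N - j := by omega
    rw [this] at hV
    exact hV.symm
  · rw [Nat.choose_eq_zero_of_lt (by omega : K < j), Nat.zero_mul]
    apply Finset.sum_eq_zero
    intro t ht
    by_cases htK : t ≤ K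
    · rw [Nat.choose_eq_zero_of_lt (by omega : t < j), Nat.mul_zero]
    · rw [Nat.choose_eq_zero_of_lt (by omega : K < t), Nat.zero_mul, Nat.zero_mul]


section
variable (N K n : ℕ)

lemma mgf_bound (hKN : K ≤ N) (hjnN : n ≤ N) (hN : 0 < N) (y : ℝ) (hy : 1 ≤ y) :
    ∑ t ∈ range (n + 1), ((K.choose t * (N - K).choose (n - t) : ℕ) : ℝ) * y ^ t
      ≤ (N.choose n : ℝ) * (1 - (K : ℝ) / N + (K : ℝ) / N * y) ^ n := by
  have hx : (0:ℝ) ≤ y - 1 := by linarith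
  have hN0 : (0:ℝ) < (N:ℝ) := by exact_mod_cast hN
  have hpow : ∀ t ∈ range (n + 1),
      y ^ t = ∑ j ∈ range (n + 1), (y - 1) ^ j * (t.choose j : ℝ) := by
    intro t ht
    simp only [Finset.mem_range] at ht
    have hb := add_pow (y - 1) (1 : ℝ) t
    simp only [one_pow, mul_one, sub_add_cancel] at hb
    rw [hb]
    apply Finset.sum_subset (Finset.range_subset_range.mpr (by omega))
    intro j hj hj'
    simp only [Finset.mem_range] at hj hj'
    rw [Nat.choose_eq_zero_of_lt (by omega)]
    simp
  calc ∑ t ∈ range (n + 1), ((K.choose t * (N - K).choose (n - t) : ℕ) : ℝ) * y ^ t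
      = ∑ t ∈ range (n + 1), ∑ j ∈ range (n + 1),
          (y - 1) ^ j * (((K.choose t * (N - K).choose (n - t) * t.choose j : ℕ)) : ℝ) := by
        refine Finset.sum_congr rfl fun t ht => ?_
        rw [hpow t ht, Finset.mul_sum]
        refine Finset.sum_congr rfl fun j hj => ?_
        push_cast
        ring
    _ = ∑ j ∈ range (n + 1),
          (y - 1) ^ j * ((K.choose j * (N - j).choose (n - j) : ℕ) : ℝ) := by
        rw [Finset.sum_comm]
        refine Finset.sum_congr rfl fun j hj => ?_
        simp only [Finset.mem_range] at hj
        rw [← Finset.mul_sum, ← Nat.cast_sum, sum_moment N K n j hKN (by omega)]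
    _ ≤ ∑ j ∈ range (n + 1),
          (y - 1) ^ j * (((K:ℝ)/N) ^ j * ((N.choose n : ℝ) * (n.choose j : ℝ))) := by
        refine Finset.sum_le_sum fun j hj => ?_
        simp only [Finset.mem_range] at hj
        refine mul_le_mul_of_nonneg_left ?_ (pow_nonneg hx j)
        have hnat := moment_ineq N K n j hKN (by omega) hjnN
        have hreal : ((K.choose j * N ^ j * (N - j).choose (n - j) : ℕ) : ℝ)
            ≤ ((K ^ j * (N.choose n * n.choose j) : ℕ) : ℝ) := Nat.cast_le.mpr hnat
        push_cast at hreal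
        rw [div_pow, div_mul_eq_mul_div, le_div_iff₀ (pow_pos hN0 j)]
        push_cast
        nlinarith [hreal]
    _ = (N.choose n : ℝ) * ∑ j ∈ range (n + 1),
          ((K:ℝ)/N * (y - 1)) ^ j * (1:ℝ) ^ (n - j) * (n.choose j : ℝ) := by
        rw [Finset.mul_sum]
        refine Finset.sum_congr rfl fun j hj => ?_
        rw [mul_pow, one_pow]
        ring
    _ = (N.choose n : ℝ) * (1 - (K : ℝ) / N + (K : ℝ) / N * y) ^ n := by
        rw [← add_pow]
        congr 1
        ring
end


/-- Hypergeometric tail bound (Lemma D.7 of Foster et al.): if `X`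
counts successes in `n` draws without replacement from a population of size `N`
with `K` successes, then `ℙ[X ≥ (p + ε) n] ≤ exp(−2ε²n)` with `p = K/N`, stated
combinatorially. -/
theorem hypergeometric_tail_bound
    (N K n : ℕ) (hKN : K ≤ N) (hn1 : 1 ≤ n) (hnN : n ≤ N)
    (ε : ℝ) (hε : 0 < ε) :
    ∑ t ∈ Finset.range (n + 1),
      (if ((K : ℝ) / (N : ℝ) + ε) * (n : ℝ) ≤ (t : ℝ) then
        ((Nat.choose K t * Nat.choose (N - K) (n - t) : ℕ) : ℝ)
      else 0) ≤
      Real.exp (-2 * ε ^ 2 * (n : ℝ)) * (Nat.choose N n : ℝ) := by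
  have hN : 0 < N := lt_of_lt_of_le hn1 hnN
  have hN0 : (0:ℝ) < (N:ℝ) := by exact_mod_cast hN
  set p : ℝ := (K:ℝ)/(N:ℝ) with hp
  have hp0 : 0 ≤ p := by positivity
  have hp1 : p ≤ 1 := by rw [hp, div_le_one hN0]; exact_mod_cast hKN
  have hy : (1:ℝ) ≤ Real.exp (4*ε) := Real.one_le_exp (by linarith)
  have hstep : ∀ t ∈ Finset.range (n+1),
      (if (p + ε) * (n:ℝ) ≤ (t:ℝ) then ((K.choose t * (N-K).choose (n-t) : ℕ):ℝ) else 0)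
        ≤ Real.exp (-(4*ε)*((p+ε)*(n:ℝ))) *
            (((K.choose t * (N-K).choose (n-t) : ℕ)):ℝ) * Real.exp (4*ε) ^ t := by
    intro t ht
    by_cases h : (p + ε) * (n:ℝ) ≤ (t:ℝ)
    · rw [if_pos h]
      have e1 : Real.exp (-(4*ε)*((p+ε)*(n:ℝ))) * Real.exp (4*ε) ^ t
          = Real.exp (4*ε*((t:ℝ) - (p+ε)*(n:ℝ))) := by
        rw [← Real.exp_nat_mul, ← Real.exp_add]
        ring_nf
      have e2 : 1 ≤ Real.exp (4*ε*((t:ℝ) - (p+ε)*(n:ℝ))) := Real.one_le_exp (by nlinarith)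
      have e3 : Real.exp (-(4*ε)*((p+ε)*(n:ℝ))) *
            (((K.choose t * (N-K).choose (n-t) : ℕ)):ℝ) * Real.exp (4*ε) ^ t
          = Real.exp (4*ε*((t:ℝ) - (p+ε)*(n:ℝ))) *
              (((K.choose t * (N-K).choose (n-t) : ℕ)):ℝ) := by
        rw [← e1]; ring
      rw [e3]
      exact le_mul_of_one_le_left (by positivity) e2
    · rw [if_neg h]
      positivity
  refine le_trans (Finset.sum_le_sum hstep) ?_
  have hfac : ∑ t ∈ Finset.range (n+1),
      Real.exp (-(4*ε)*((p+ε)*(n:ℝ))) *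
        (((K.choose t * (N-K).choose (n-t) : ℕ)):ℝ) * Real.exp (4*ε) ^ t
      = Real.exp (-(4*ε)*((p+ε)*(n:ℝ))) *
        ∑ t ∈ Finset.range (n+1),
          (((K.choose t * (N-K).choose (n-t) : ℕ)):ℝ) * Real.exp (4*ε) ^ t := by
    rw [Finset.mul_sum]
    exact Finset.sum_congr rfl fun t ht => by ring
  rw [hfac]
  have hbase : (0:ℝ) ≤ 1 - p + p * Real.exp (4*ε) := by
    have := mul_le_mul_of_nonneg_left hy hp0
    linarith
  calc Real.exp (-(4*ε)*((p+ε)*(n:ℝ))) *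
        ∑ t ∈ Finset.range (n+1),
          (((K.choose t * (N-K).choose (n-t) : ℕ)):ℝ) * Real.exp (4*ε) ^ t
      ≤ Real.exp (-(4*ε)*((p+ε)*(n:ℝ))) *
          ((N.choose n : ℝ) * (1 - p + p * Real.exp (4*ε)) ^ n) :=
        mul_le_mul_of_nonneg_left (mgf_bound N K n hKN hnN hN (Real.exp (4*ε)) hy)
          (Real.exp_nonneg _)
    _ ≤ Real.exp (-(4*ε)*((p+ε)*(n:ℝ))) *
          ((N.choose n : ℝ) * (Real.exp (p * (4*ε) + (4*ε) ^ 2 / 8)) ^ n) := by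
        refine mul_le_mul_of_nonneg_left (mul_le_mul_of_nonneg_left ?_ (by positivity)) ?_
        · exact pow_le_pow_left₀ hbase (hoeff_scalar p hp0 hp1 (by linarith)) n
        · exact Real.exp_nonneg _
    _ = Real.exp (-2 * ε ^ 2 * (n:ℝ)) * (N.choose n : ℝ) := by
        rw [← Real.exp_nat_mul, ← mul_assoc, mul_right_comm, ← Real.exp_add]
        congr 1
        ring
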